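/- arXiv:2309.08013 — 2 statements merged into one kernel-verified Lean document; each statement's English description precedes it below -/
import Mathlib

section
/- The billiard rotation number ρ̂ is strictly increasing in e and strictly decreasing in f on Δ: if 0 < f < e1 < e2 < 1 then ρ̂(e1,f) < ρ̂(e2,f), and if 0 < f1 < f2 < e < 1 then ρ̂(e,f1) > ρ̂(e,f2). -/
open Real

/-- Incomplete elliptic integral of the first kind `F(φ,e)`. -/
noncomputable def ellF (φ e : ℝ) : ℝ :=
  ∫ τ in (0:ℝ)..φ, 1 / Real.sqrt (1 - e ^ 2 * Real.sin τ ^ 2)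

/-- Complete elliptic integral of the first kind `K(e)`. -/
noncomputable def ellK (e : ℝ) : ℝ := ellF (Real.pi / 2) e

/-- The angle `ω̂(e,f)`. -/
noncomputable def omegaHat (e f : ℝ) : ℝ :=
  Real.arcsin (Real.sqrt ((e ^ 2 - f ^ 2) / (e ^ 2 * (1 - f ^ 2))))

/-- The billiard rotation number `ρ̂(e,f)`. -/
noncomputable def rhoHat (e f : ℝ) : ℝ := ellF (omegaHat e f) e / (2 * ellK e)

open Set intervalIntegral

/-- `H e f`: the integral `∫₀^f dz/(√(e²−z²)√(1−z²))`. -/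
noncomputable def Haux (e f : ℝ) : ℝ :=
  ∫ z in (0:ℝ)..f, 1 / (Real.sqrt (e ^ 2 - z ^ 2) * Real.sqrt (1 - z ^ 2))

lemma one_sub_sq_sin_pos {e : ℝ} (he : e ^ 2 < 1) (τ : ℝ) :
    0 < 1 - e ^ 2 * Real.sin τ ^ 2 := by
  nlinarith [Real.sin_sq_le_one τ, sq_nonneg e, sq_nonneg (Real.sin τ)]

lemma contI {e : ℝ} (he : e ^ 2 < 1) :
    Continuous fun τ : ℝ => 1 / Real.sqrt (1 - e ^ 2 * Real.sin τ ^ 2) := by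
  apply continuous_const.div
  · exact Real.continuous_sqrt.comp (by continuity)
  · intro τ
    exact (Real.sqrt_pos.mpr (one_sub_sq_sin_pos he τ)).ne'

lemma ellK_pos {e : ℝ} (he : e ^ 2 < 1) : 0 < ellK e := by
  have := Real.pi_pos
  refine intervalIntegral.intervalIntegral_pos_of_pos
    ((contI he).intervalIntegrable _ _) (fun τ => ?_) (by linarith)
  exact div_pos one_pos (Real.sqrt_pos.mpr (one_sub_sq_sin_pos he τ))

lemma contH {e c : ℝ} (hc : 0 ≤ c) (hce : c < e) (he : e < 1) :
    ContinuousOn (fun z : ℝ => 1 / (Real.sqrt (e ^ 2 - z ^ 2) * Real.sqrt (1 - z ^ 2)))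
      (Icc 0 c) := by
  have key : ∀ z ∈ Icc (0:ℝ) c, 0 < e ^ 2 - z ^ 2 ∧ 0 < 1 - z ^ 2 := by
    rintro z ⟨h0, h1⟩
    constructor <;> nlinarith
  apply ContinuousOn.div continuousOn_const
  · exact ((Real.continuous_sqrt.comp (by continuity)).mul
      (Real.continuous_sqrt.comp (by continuity))).continuousOn
  · intro z hz
    obtain ⟨h1, h2⟩ := key z hz
    exact (mul_pos (Real.sqrt_pos.mpr h1) (Real.sqrt_pos.mpr h2)).ne'

lemma substB {e f : ℝ} (hf : 0 < f) (hfe : f < e) (he : e < 1) :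
    ellF (Real.arcsin (f / e)) e = Haux e f := by
  have he0 : 0 < e := hf.trans hfe
  have hfe1 : f / e < 1 := (div_lt_one he0).mpr hfe
  have hfe0 : 0 < f / e := div_pos hf he0
  set ψ := Real.arcsin (f / e) with hψdef
  have hψ0 : 0 < ψ := Real.arcsin_pos.mpr hfe0
  have hψlt : ψ < π / 2 := Real.arcsin_lt_pi_div_two.mpr hfe1
  have hsinψ : Real.sin ψ = f / e := Real.sin_arcsin (by linarith) (by linarith)
  have huIcc : uIcc (0:ℝ) ψ = Icc 0 ψ := uIcc_of_le hψ0.le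
  have hcos : ∀ σ ∈ Icc (0:ℝ) ψ, 0 < Real.cos σ := fun σ hσ =>
    Real.cos_pos_of_mem_Ioo ⟨by linarith [hσ.1, Real.pi_pos], lt_of_le_of_lt hσ.2 hψlt⟩
  have hsin : ∀ σ ∈ Icc (0:ℝ) ψ, 0 ≤ Real.sin σ ∧ e * Real.sin σ ≤ f := by
    intro σ hσ
    have h1 : Real.sin σ ≤ Real.sin ψ := by
      apply Real.sin_le_sin_of_le_of_le_pi_div_two (by linarith [hσ.1, Real.pi_pos]) hψlt.le hσ.2
    constructor
    · exact Real.sin_nonneg_of_nonneg_of_le_pi hσ.1 (by linarith [Real.pi_pos, hσ.2])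
    · calc e * Real.sin σ ≤ e * Real.sin ψ := by nlinarith
        _ = f := by rw [hsinψ]; field_simp
  have key := intervalIntegral.integral_comp_smul_deriv'
    (f := fun σ => e * Real.sin σ) (f' := fun σ => e * Real.cos σ)
    (g := fun z : ℝ => 1 / (Real.sqrt (e ^ 2 - z ^ 2) * Real.sqrt (1 - z ^ 2)))
    (a := (0:ℝ)) (b := ψ)
    (fun σ _ => (Real.hasDerivAt_sin σ).const_mul e)
    (by fun_prop)
    (by
      apply (contH (le_refl 0 |>.trans hf.le) hfe he).mono
      rw [huIcc]
      rintro z ⟨σ, hσ, rfl⟩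
      exact ⟨mul_nonneg he0.le (hsin σ hσ).1, (hsin σ hσ).2⟩)
  simp only [Real.sin_zero, mul_zero, hsinψ] at key
  have hfval : e * (f / e) = f := by field_simp
  rw [hfval] at key
  rw [ellF, Haux, ← key]
  apply intervalIntegral.integral_congr
  rw [huIcc]
  intro σ hσ
  have hc := hcos σ hσ
  have h1 : Real.sqrt (e ^ 2 - (e * Real.sin σ) ^ 2) = e * Real.cos σ := by
    rw [show e ^ 2 - (e * Real.sin σ) ^ 2 = (e * Real.cos σ) ^ 2 by
      have := Real.sin_sq_add_cos_sq σ; ring_nf; nlinarith]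
    exact Real.sqrt_sq (by positivity)
  have h2 : (1:ℝ) - (e * Real.sin σ) ^ 2 = 1 - e ^ 2 * Real.sin σ ^ 2 := by ring
  simp only [smul_eq_mul, Function.comp, h1, h2]
  have hs : (0:ℝ) < Real.sqrt (1 - e ^ 2 * Real.sin σ ^ 2) :=
    Real.sqrt_pos.mpr (one_sub_sq_sin_pos (by nlinarith) σ)
  field_simp

lemma etaDeriv {e : ℝ} (he0 : 0 < e) (he : e < 1) {τ : ℝ} (hS : 0 < Real.sin τ) (hC : 0 ≤ Real.cos τ) :
    HasDerivAt (fun t => Real.arcsin (Real.cos t / Real.sqrt (1 - e ^ 2 * Real.sin t ^ 2)))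
      (-Real.sqrt (1 - e ^ 2) / (1 - e ^ 2 * Real.sin τ ^ 2)) τ := by
  have he2 : e ^ 2 < 1 := by nlinarith
  have hu : 0 < 1 - e ^ 2 * Real.sin τ ^ 2 := one_sub_sq_sin_pos he2 τ
  have hr : 0 < Real.sqrt (1 - e ^ 2 * Real.sin τ ^ 2) := Real.sqrt_pos.mpr hu
  have hr2 : Real.sqrt (1 - e ^ 2 * Real.sin τ ^ 2) ^ 2 = 1 - e ^ 2 * Real.sin τ ^ 2 :=
    Real.sq_sqrt hu.le
  have hq : 0 < Real.sqrt (1 - e ^ 2) := Real.sqrt_pos.mpr (by linarith)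
  have hq2 : Real.sqrt (1 - e ^ 2) ^ 2 = 1 - e ^ 2 := Real.sq_sqrt (by linarith)
  have hpyth : Real.sin τ ^ 2 + Real.cos τ ^ 2 = 1 := Real.sin_sq_add_cos_sq τ
  have hu' : HasDerivAt (fun t => 1 - e ^ 2 * Real.sin t ^ 2)
      (-(e ^ 2 * (2 * Real.sin τ * Real.cos τ))) τ := by
    simpa [mul_assoc, mul_comm, mul_left_comm] using
      (((Real.hasDerivAt_sin τ).pow 2).const_mul (e ^ 2)).const_sub 1
  have hsq : HasDerivAt (fun t => Real.sqrt (1 - e ^ 2 * Real.sin t ^ 2))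
      (1 / (2 * Real.sqrt (1 - e ^ 2 * Real.sin τ ^ 2)) *
        (-(e ^ 2 * (2 * Real.sin τ * Real.cos τ)))) τ := by
    simpa [Function.comp_def] using (Real.hasDerivAt_sqrt hu.ne').comp τ hu'
  have hG : HasDerivAt (fun t => Real.cos t / Real.sqrt (1 - e ^ 2 * Real.sin t ^ 2))
      ((-Real.sin τ * Real.sqrt (1 - e ^ 2 * Real.sin τ ^ 2) -
          Real.cos τ * (1 / (2 * Real.sqrt (1 - e ^ 2 * Real.sin τ ^ 2)) *
            (-(e ^ 2 * (2 * Real.sin τ * Real.cos τ))))) /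
        Real.sqrt (1 - e ^ 2 * Real.sin τ ^ 2) ^ 2) τ :=
    (Real.hasDerivAt_cos τ).div hsq hr.ne'
  set G : ℝ := Real.cos τ / Real.sqrt (1 - e ^ 2 * Real.sin τ ^ 2) with hGdef
  have hG2 : G ^ 2 < 1 := by
    rw [hGdef, div_pow, hr2, div_lt_one hu]
    nlinarith [mul_pos (mul_pos hS hS) (show (0:ℝ) < 1 - e ^ 2 by linarith), hpyth]
  have hG0 : 0 ≤ G := div_nonneg hC hr.le
  have hG1 : G < 1 := by nlinarith
  have hGm1 : (-1:ℝ) < G := by linarith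
  have harc := ((Real.hasDerivAt_arcsin hGm1.ne' hG1.ne).comp τ hG :
    HasDerivAt (Real.arcsin ∘ fun t => Real.cos t / Real.sqrt (1 - e ^ 2 * Real.sin t ^ 2)) _ τ)
  have hroot : Real.sqrt (1 - G ^ 2) =
      Real.sin τ * Real.sqrt (1 - e ^ 2) / Real.sqrt (1 - e ^ 2 * Real.sin τ ^ 2) := by
    rw [show (1:ℝ) - G ^ 2 =
        (Real.sin τ * Real.sqrt (1 - e ^ 2) / Real.sqrt (1 - e ^ 2 * Real.sin τ ^ 2)) ^ 2 by
      rw [hGdef]; field_simp; nlinarith [hr2, hq2, hpyth]]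
    exact Real.sqrt_sq (by positivity)
  refine harc.congr_deriv (Eq.symm ?_)
  rw [hroot]
  field_simp
  linear_combination (-(Real.sqrt (1 - e ^ 2 * Real.sin τ ^ 2) ^ 2)) * hq2 +
    e ^ 2 * (1 - Real.sin τ ^ 2) * hr2 - e ^ 2 * (1 - e ^ 2 * Real.sin τ ^ 2) * hpyth

lemma etaPoint {e τ : ℝ} (he0 : 0 < e) (he : e < 1) (hS : 0 < Real.sin τ)
    (hC : 0 ≤ Real.cos τ) :
    -Real.sqrt (1 - e ^ 2) / (1 - e ^ 2 * Real.sin τ ^ 2) *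
      (1 / Real.sqrt (1 - e ^ 2 *
        Real.sin (Real.arcsin (Real.cos τ / Real.sqrt (1 - e ^ 2 * Real.sin τ ^ 2))) ^ 2)) =
      -(1 / Real.sqrt (1 - e ^ 2 * Real.sin τ ^ 2)) := by
  have he2 : e ^ 2 < 1 := by nlinarith
  have hu : 0 < 1 - e ^ 2 * Real.sin τ ^ 2 := one_sub_sq_sin_pos he2 τ
  have hr : 0 < Real.sqrt (1 - e ^ 2 * Real.sin τ ^ 2) := Real.sqrt_pos.mpr hu
  have hr2 : Real.sqrt (1 - e ^ 2 * Real.sin τ ^ 2) ^ 2 = 1 - e ^ 2 * Real.sin τ ^ 2 :=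
    Real.sq_sqrt hu.le
  have hq : 0 < Real.sqrt (1 - e ^ 2) := Real.sqrt_pos.mpr (by linarith)
  have hq2 : Real.sqrt (1 - e ^ 2) ^ 2 = 1 - e ^ 2 := Real.sq_sqrt (by linarith)
  have hpyth : Real.sin τ ^ 2 + Real.cos τ ^ 2 = 1 := Real.sin_sq_add_cos_sq τ
  set G : ℝ := Real.cos τ / Real.sqrt (1 - e ^ 2 * Real.sin τ ^ 2) with hGdef
  have hG2 : G ^ 2 < 1 := by
    rw [hGdef, div_pow, hr2, div_lt_one hu]
    nlinarith [mul_pos (mul_pos hS hS) (show (0:ℝ) < 1 - e ^ 2 by linarith), hpyth]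
  have hG0 : 0 ≤ G := div_nonneg hC hr.le
  have hG1 : G ≤ 1 := by nlinarith
  have hsinG : Real.sin (Real.arcsin G) = G := Real.sin_arcsin (by linarith) hG1
  rw [hsinG]
  have h1 : 1 - e ^ 2 * G ^ 2 = (1 - e ^ 2) / (1 - e ^ 2 * Real.sin τ ^ 2) := by
    rw [hGdef, div_pow, hr2]
    field_simp
    linear_combination (-(e ^ 2)) * hpyth
  rw [h1, Real.sqrt_div (by linarith : (0:ℝ) ≤ 1 - e ^ 2)]
  field_simp
  linear_combination (-1) * hr2

lemma substA {e f : ℝ} (hf : 0 < f) (hfe : f < e) (he : e < 1) :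
    ellF (omegaHat e f) e = ellK e - ellF (Real.arcsin (f / e)) e := by
  have he0 : 0 < e := hf.trans hfe
  have he2 : e ^ 2 < 1 := by nlinarith
  have hf1 : f < 1 := hfe.trans he
  set X : ℝ := (e ^ 2 - f ^ 2) / (e ^ 2 * (1 - f ^ 2)) with hXdef
  have hden : 0 < e ^ 2 * (1 - f ^ 2) := by nlinarith
  have hX0 : 0 < X := div_pos (by nlinarith) hden
  have hX1 : X < 1 := by
    rw [hXdef, div_lt_one hden]
    nlinarith [mul_pos (mul_pos hf hf) (show (0:ℝ) < 1 - e ^ 2 by linarith)]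
  set s : ℝ := Real.sqrt X with hsdef
  have hs0 : 0 < s := Real.sqrt_pos.mpr hX0
  have hs1 : s < 1 := by
    rw [hsdef, show (1:ℝ) = Real.sqrt 1 by simp]
    exact Real.sqrt_lt_sqrt hX0.le hX1
  have hsX : s ^ 2 = X := Real.sq_sqrt hX0.le
  set a : ℝ := omegaHat e f with hadef
  have haeq : a = Real.arcsin s := rfl
  have ha0 : 0 < a := by rw [haeq]; exact Real.arcsin_pos.mpr hs0
  have haπ : a < π / 2 := by rw [haeq]; exact Real.arcsin_lt_pi_div_two.mpr hs1
  have hsina : Real.sin a = s := by rw [haeq]; exact Real.sin_arcsin (by linarith) hs1.le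
  have hcosa : Real.cos a = Real.sqrt (1 - s ^ 2) := by rw [haeq, Real.cos_arcsin]
  have h1me2X : 0 < 1 - e ^ 2 * X := by nlinarith
  have hkey : 1 - X = (f / e) ^ 2 * (1 - e ^ 2 * X) := by
    rw [hXdef]; field_simp [(by nlinarith : (0:ℝ) < 1 - f ^ 2).ne']; ring
  have hGa : Real.sqrt (1 - X) / Real.sqrt (1 - e ^ 2 * X) = f / e := by
    rw [hkey, Real.sqrt_mul (sq_nonneg (f / e)),
      Real.sqrt_sq (by positivity : (0:ℝ) ≤ f / e), mul_div_assoc,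
      div_self (Real.sqrt_pos.mpr h1me2X).ne', mul_one]
  have hτfacts : ∀ τ ∈ Icc a (π / 2), 0 < Real.sin τ ∧ 0 ≤ Real.cos τ := by
    intro τ hτ
    have h1 : Real.sin a ≤ Real.sin τ :=
      Real.sin_le_sin_of_le_of_le_pi_div_two (by linarith [Real.pi_pos]) hτ.2 hτ.1
    exact ⟨by rw [hsina] at h1; linarith,
      Real.cos_nonneg_of_mem_Icc ⟨by linarith [Real.pi_pos, hτ.1, ha0], hτ.2⟩⟩
  have huIcc : uIcc a (π / 2) = Icc a (π / 2) := uIcc_of_le haπ.le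
  have key := intervalIntegral.integral_comp_smul_deriv
    (f := fun t => Real.arcsin (Real.cos t / Real.sqrt (1 - e ^ 2 * Real.sin t ^ 2)))
    (f' := fun t => -Real.sqrt (1 - e ^ 2) / (1 - e ^ 2 * Real.sin t ^ 2))
    (g := fun σ : ℝ => 1 / Real.sqrt (1 - e ^ 2 * Real.sin σ ^ 2))
    (a := a) (b := π / 2)
    (by
      intro τ hτ
      rw [huIcc] at hτ
      exact etaDeriv he0 he (hτfacts τ hτ).1 (hτfacts τ hτ).2)
    (by
      apply Continuous.continuousOn
      have hcu : Continuous fun t : ℝ => 1 - e ^ 2 * Real.sin t ^ 2 := by fun_prop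
      exact continuous_const.neg.div hcu fun τ => (one_sub_sq_sin_pos he2 τ).ne')
    (contI he2)
  have hend2 : Real.arcsin (Real.cos (π / 2) / Real.sqrt (1 - e ^ 2 * Real.sin (π / 2) ^ 2))
      = 0 := by
    rw [Real.cos_pi_div_two, zero_div, Real.arcsin_zero]
  have hend1 : Real.arcsin (Real.cos a / Real.sqrt (1 - e ^ 2 * Real.sin a ^ 2))
      = Real.arcsin (f / e) := by
    rw [hsina, hcosa, hsX, hGa]
  beta_reduce at key
  rw [hend1, hend2] at key
  have hcongr : ∫ τ in a..(π / 2),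
      (-Real.sqrt (1 - e ^ 2) / (1 - e ^ 2 * Real.sin τ ^ 2)) •
        ((fun σ : ℝ => 1 / Real.sqrt (1 - e ^ 2 * Real.sin σ ^ 2)) ∘
          fun t => Real.arcsin (Real.cos t / Real.sqrt (1 - e ^ 2 * Real.sin t ^ 2))) τ
      = ∫ τ in a..(π / 2), -(1 / Real.sqrt (1 - e ^ 2 * Real.sin τ ^ 2)) := by
    apply intervalIntegral.integral_congr
    rw [huIcc]
    intro τ hτ
    simpa [Function.comp] using
      etaPoint he0 he (hτfacts τ hτ).1 (hτfacts τ hτ).2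
  rw [hcongr] at key
  have h2 : ∫ τ in a..(π / 2), -(1 / Real.sqrt (1 - e ^ 2 * Real.sin τ ^ 2))
      = -(∫ τ in a..(π / 2), 1 / Real.sqrt (1 - e ^ 2 * Real.sin τ ^ 2)) :=
    intervalIntegral.integral_neg
  have h3 : (∫ σ in Real.arcsin (f / e)..(0:ℝ),
        1 / Real.sqrt (1 - e ^ 2 * Real.sin σ ^ 2))
      = -(∫ σ in (0:ℝ)..Real.arcsin (f / e),
        1 / Real.sqrt (1 - e ^ 2 * Real.sin σ ^ 2)) :=
    intervalIntegral.integral_symm _ _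
  have hsplit : ellF a e + (∫ τ in a..(π / 2),
      1 / Real.sqrt (1 - e ^ 2 * Real.sin τ ^ 2)) = ellK e := by
    rw [ellF, ellK, ellF]
    exact intervalIntegral.integral_add_adjacent_intervals
      ((contI he2).intervalIntegrable _ _) ((contI he2).intervalIntegrable _ _)
  have hψ : ellF (Real.arcsin (f / e)) e
      = ∫ σ in (0:ℝ)..Real.arcsin (f / e),
          1 / Real.sqrt (1 - e ^ 2 * Real.sin σ ^ 2) := rfl
  rw [h2, h3] at key
  linarith [key, hsplit]

lemma rhoHat_eq {e f : ℝ} (hf : 0 < f) (hfe : f < e) (he : e < 1) :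
    rhoHat e f = (ellK e - Haux e f) / (2 * ellK e) := by
  rw [rhoHat, substA hf hfe he, substB hf hfe he]

lemma Haux_pos {e f : ℝ} (hf : 0 < f) (hfe : f < e) (he : e < 1) : 0 < Haux e f := by
  refine intervalIntegral.intervalIntegral_pos_of_pos_on
    ((contH hf.le hfe he).intervalIntegrable_of_Icc hf.le) (fun z hz => ?_) hf
  have h1 : 0 < e ^ 2 - z ^ 2 := by nlinarith [hz.1, hz.2]
  have h2 : 0 < 1 - z ^ 2 := by nlinarith [hz.1, hz.2, hfe.trans he]
  exact div_pos one_pos (mul_pos (Real.sqrt_pos.mpr h1) (Real.sqrt_pos.mpr h2))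

lemma Haux_lt_right {e f1 f2 : ℝ} (hf1 : 0 < f1) (h12 : f1 < f2) (hf2e : f2 < e)
    (he : e < 1) : Haux e f1 < Haux e f2 := by
  have hcont := contH (by linarith : (0:ℝ) ≤ f2) hf2e he
  have hi1 : IntervalIntegrable
      (fun z : ℝ => 1 / (Real.sqrt (e ^ 2 - z ^ 2) * Real.sqrt (1 - z ^ 2)))
      MeasureTheory.volume 0 f1 :=
    (hcont.mono (Icc_subset_Icc le_rfl h12.le)).intervalIntegrable_of_Icc hf1.le
  have hi2 : IntervalIntegrable
      (fun z : ℝ => 1 / (Real.sqrt (e ^ 2 - z ^ 2) * Real.sqrt (1 - z ^ 2)))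
      MeasureTheory.volume f1 f2 :=
    (hcont.mono (Icc_subset_Icc hf1.le le_rfl)).intervalIntegrable_of_Icc h12.le
  have hsplit : Haux e f1 + (∫ z in f1..f2,
      1 / (Real.sqrt (e ^ 2 - z ^ 2) * Real.sqrt (1 - z ^ 2))) = Haux e f2 :=
    intervalIntegral.integral_add_adjacent_intervals hi1 hi2
  have hpos : 0 < ∫ z in f1..f2,
      1 / (Real.sqrt (e ^ 2 - z ^ 2) * Real.sqrt (1 - z ^ 2)) := by
    refine intervalIntegral.intervalIntegral_pos_of_pos_on hi2 (fun z hz => ?_) h12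
    have h1 : 0 < e ^ 2 - z ^ 2 := by nlinarith [hz.1, hz.2, hf1]
    have h2 : 0 < 1 - z ^ 2 := by nlinarith [hz.1, hz.2, hf1, hf2e.trans he]
    exact div_pos one_pos (mul_pos (Real.sqrt_pos.mpr h1) (Real.sqrt_pos.mpr h2))
  linarith

lemma Haux_lt_left {e1 e2 f : ℝ} (hf : 0 < f) (hfe : f < e1) (h12 : e1 < e2)
    (he2 : e2 < 1) : Haux e2 f < Haux e1 f := by
  have he1 : e1 < 1 := h12.trans he2
  refine intervalIntegral.integral_lt_integral_of_continuousOn_of_le_of_exists_lt hf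
    (contH hf.le (hfe.trans h12) he2) (contH hf.le hfe he1) (fun z hz => ?_) ?_
  · have h1 : 0 < e1 ^ 2 - z ^ 2 := by nlinarith [hz.1, hz.2]
    have h2 : 0 < 1 - z ^ 2 := by nlinarith [hz.1, hz.2, hfe.trans he1]
    have h3 : Real.sqrt (e1 ^ 2 - z ^ 2) ≤ Real.sqrt (e2 ^ 2 - z ^ 2) :=
      Real.sqrt_le_sqrt (by nlinarith [hz.1, hz.2])
    have h4 : 0 < Real.sqrt (e1 ^ 2 - z ^ 2) * Real.sqrt (1 - z ^ 2) :=
      mul_pos (Real.sqrt_pos.mpr h1) (Real.sqrt_pos.mpr h2)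
    exact one_div_le_one_div_of_le h4
      (mul_le_mul_of_nonneg_right h3 (Real.sqrt_nonneg _))
  · refine ⟨0, ⟨le_rfl, hf.le⟩, ?_⟩
    have he10 : 0 < e1 := hf.trans hfe
    have h1 : Real.sqrt (e1 ^ 2 - 0 ^ 2) < Real.sqrt (e2 ^ 2 - 0 ^ 2) := by
      apply Real.sqrt_lt_sqrt (by nlinarith)
      nlinarith
    have h2 : Real.sqrt (1 - (0:ℝ) ^ 2) = 1 := by norm_num
    rw [h2, mul_one, mul_one]
    exact one_div_lt_one_div_of_lt (Real.sqrt_pos.mpr (by nlinarith)) h1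

lemma ellK_lt {e1 e2 : ℝ} (he1 : 0 < e1) (h12 : e1 < e2) (he2 : e2 < 1) :
    ellK e1 < ellK e2 := by
  have hπ : 0 < π / 2 := by linarith [Real.pi_pos]
  have he12 : e1 ^ 2 < 1 := by nlinarith
  have he22 : e2 ^ 2 < 1 := by nlinarith
  refine intervalIntegral.integral_lt_integral_of_continuousOn_of_le_of_exists_lt hπ
    (contI he12).continuousOn (contI he22).continuousOn (fun τ _ => ?_) ?_
  · have h1 : 0 < 1 - e2 ^ 2 * Real.sin τ ^ 2 := one_sub_sq_sin_pos he22 τ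
    have h2 : Real.sqrt (1 - e2 ^ 2 * Real.sin τ ^ 2)
        ≤ Real.sqrt (1 - e1 ^ 2 * Real.sin τ ^ 2) :=
      Real.sqrt_le_sqrt (by nlinarith [mul_nonneg (show (0:ℝ) ≤ e2 ^ 2 - e1 ^ 2 by nlinarith) (sq_nonneg (Real.sin τ))])
    exact one_div_le_one_div_of_le (Real.sqrt_pos.mpr h1) h2
  · refine ⟨π / 2, ⟨hπ.le, le_rfl⟩, ?_⟩
    rw [Real.sin_pi_div_two]
    have h1 : Real.sqrt (1 - e2 ^ 2 * 1 ^ 2) < Real.sqrt (1 - e1 ^ 2 * 1 ^ 2) :=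
      Real.sqrt_lt_sqrt (by nlinarith) (by nlinarith)
    exact one_div_lt_one_div_of_lt (Real.sqrt_pos.mpr (by nlinarith)) h1

/-- the billiard rotation number is strictly increasing in `e` and
strictly decreasing in `f` on `Δ`. -/
theorem rhoHat_monotone :
    (∀ e1 e2 f : ℝ, 0 < f → f < e1 → e1 < e2 → e2 < 1 → rhoHat e1 f < rhoHat e2 f) ∧
    (∀ e f1 f2 : ℝ, 0 < f1 → f1 < f2 → f2 < e → e < 1 → rhoHat e f2 < rhoHat e f1) := by
  constructor
  · intro e1 e2 f hf hfe1 h12 he2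
    have he1 : e1 < 1 := h12.trans he2
    have hfe2 : f < e2 := hfe1.trans h12
    have he10 : 0 < e1 := hf.trans hfe1
    rw [rhoHat_eq hf hfe1 he1, rhoHat_eq hf hfe2 he2]
    have hK1 : 0 < ellK e1 := ellK_pos (by nlinarith)
    have hK2 : 0 < ellK e2 := ellK_pos (by nlinarith)
    have hH1 : 0 < Haux e1 f := Haux_pos hf hfe1 he1
    have hH : Haux e2 f < Haux e1 f := Haux_lt_left hf hfe1 h12 he2
    have hK : ellK e1 < ellK e2 := ellK_lt he10 h12 he2
    rw [div_lt_div_iff₀ (by positivity) (by positivity)]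
    nlinarith [mul_lt_mul_of_pos_right hH hK1, mul_lt_mul_of_pos_left hK hH1]
  · intro e f1 f2 hf1 h12 hf2e he
    have hf1e : f1 < e := h12.trans hf2e
    rw [rhoHat_eq (hf1.trans h12) hf2e he, rhoHat_eq hf1 hf1e he]
    have hK : 0 < ellK e := ellK_pos (by nlinarith [hf1.trans hf1e])
    have hH : Haux e f1 < Haux e f2 := Haux_lt_right hf1 h12 hf2e he
    rw [div_lt_div_iff₀ (by positivity) (by positivity)]
    nlinarith
end

section
/- For each fixed f ∈ (0,1), the billiard rotation number tends to 1/2 as the inner eccentricity tends to 1: lim_{e→1⁻} ρ̂(e,f) = 1/2, where the limit is taken over e ∈ (f,1). -/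
open Real Filter

lemma my_sqrt_add_le {a b : ℝ} (ha : 0 ≤ a) (hb : 0 ≤ b) :
    Real.sqrt (a + b) ≤ Real.sqrt a + Real.sqrt b := by
  have h : a + b ≤ (Real.sqrt a + Real.sqrt b) ^ 2 := by
    nlinarith [Real.sq_sqrt ha, Real.sq_sqrt hb, Real.sqrt_nonneg a, Real.sqrt_nonneg b]
  calc Real.sqrt (a + b) ≤ Real.sqrt ((Real.sqrt a + Real.sqrt b) ^ 2) := Real.sqrt_le_sqrt h
    _ = _ := Real.sqrt_sq (by positivity)

lemma denom_pos {e : ℝ} (he1 : -1 < e) (he2 : e < 1) (τ : ℝ) :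
    0 < 1 - e ^ 2 * Real.sin τ ^ 2 := by
  nlinarith [Real.sin_sq_le_one τ, sq_nonneg (Real.sin τ), sq_nonneg e]

lemma cont_g {e : ℝ} (he1 : -1 < e) (he2 : e < 1) :
    Continuous (fun τ : ℝ => 1 / Real.sqrt (1 - e ^ 2 * Real.sin τ ^ 2)) := by
  apply continuous_const.div
  · exact (continuous_const.sub (continuous_const.mul ((Real.continuous_sin.pow 2)))).sqrt
  · exact fun τ => (Real.sqrt_pos.2 (denom_pos he1 he2 τ)).ne'

lemma log_integral {d : ℝ} (hd : 0 < d) :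
    ∫ τ in (0:ℝ)..(π/2), (Real.sqrt 2 * (d + π/2 - τ))⁻¹
      = (Real.sqrt 2)⁻¹ * (Real.log (d + π/2) - Real.log d) := by
  have hpi : (0:ℝ) < π/2 := by positivity
  have key : ∀ x ∈ Set.uIcc (0:ℝ) (π/2),
      HasDerivAt (fun τ => -(Real.sqrt 2)⁻¹ * Real.log (d + π/2 - τ))
        ((Real.sqrt 2 * (d + π/2 - x))⁻¹) x := by
    intro x hx
    rw [Set.uIcc_of_le hpi.le] at hx
    have hne : d + π/2 - x ≠ 0 := by
      have := hx.2; nlinarith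
    have h1 : HasDerivAt (fun τ : ℝ => d + π/2 - τ) (-1) x := by
      simpa using (hasDerivAt_id x).const_sub (d + π/2)
    have h2 := (Real.hasDerivAt_log hne).comp x h1
    have h3 := h2.const_mul (-(Real.sqrt 2)⁻¹)
    convert h3 using 1
    have h2pos : (0:ℝ) < Real.sqrt 2 := by positivity
    have hA : 0 < d * 2 + π - 2 * x := by nlinarith [hx.2]
    case e'_4 => rfl
    case e'_5 => rfl
    case e'_8 => rfl
    rw [mul_inv]
    ring
  rw [intervalIntegral.integral_eq_sub_of_hasDerivAt key]
  · norm_num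
    ring
  · apply ContinuousOn.intervalIntegrable
    apply ContinuousOn.inv₀
    · fun_prop
    · intro x hx
      rw [Set.uIcc_of_le hpi.le] at hx
      have : 0 < d + π/2 - x := by nlinarith [hx.2]
      positivity

lemma ellK_ge_log {e : ℝ} (he0 : 0 < e) (he1 : e < 1) :
    (Real.sqrt 2)⁻¹ * (Real.log (Real.sqrt (1 - e) + π/2) - Real.log (Real.sqrt (1 - e)))
      ≤ ellK e := by
  have hpi : (0:ℝ) < π/2 := by positivity
  have hd : 0 < Real.sqrt (1 - e) := Real.sqrt_pos.2 (by linarith)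
  set d := Real.sqrt (1 - e) with hdd
  have hd2 : d ^ 2 = 1 - e := Real.sq_sqrt (by linarith)
  rw [← log_integral hd]
  unfold ellK ellF
  apply intervalIntegral.integral_mono_on hpi.le
  · apply ContinuousOn.intervalIntegrable
    apply ContinuousOn.inv₀
    · fun_prop
    · intro x hx
      rw [Set.uIcc_of_le hpi.le] at hx
      have : 0 < d + π/2 - x := by nlinarith [hx.2]
      positivity
  · exact (cont_g (by linarith) he1).intervalIntegrable _ _
  · intro τ hτ
    have h2pos : (0:ℝ) < Real.sqrt 2 := by positivity
    have h2ge : (1:ℝ) ≤ Real.sqrt 2 := by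
      nlinarith [Real.mul_self_sqrt (le_of_lt (two_pos : (0:ℝ) < 2))]
    have hcos : 0 ≤ Real.cos τ := by
      apply Real.cos_nonneg_of_mem_Icc
      constructor <;> [linarith [hτ.1]; exact hτ.2]
    have hcosle : Real.cos τ ≤ π/2 - τ := by
      rw [← Real.sin_pi_div_two_sub]
      exact Real.sin_le (by linarith [hτ.2])
    have hAp : 0 < d + π/2 - τ := by nlinarith [hτ.2]
    have hchain : Real.sqrt (1 - e ^ 2 * Real.sin τ ^ 2) ≤ Real.sqrt 2 * (d + π/2 - τ) := by
      calc Real.sqrt (1 - e ^ 2 * Real.sin τ ^ 2)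
          ≤ Real.sqrt (Real.cos τ ^ 2 + 2 * (1 - e)) := by
            apply Real.sqrt_le_sqrt
            have hs : Real.sin τ ^ 2 ≤ 1 := Real.sin_sq_le_one τ
            have h1 : (1 - e ^ 2) * Real.sin τ ^ 2 ≤ 2 * (1 - e) := by
              nlinarith [mul_le_mul_of_nonneg_left hs (show (0:ℝ) ≤ 1 - e ^ 2 by nlinarith),
                sq_nonneg (1 - e)]
            nlinarith [Real.sin_sq_add_cos_sq τ]
        _ ≤ Real.sqrt (Real.cos τ ^ 2) + Real.sqrt (2 * (1 - e)) :=
            my_sqrt_add_le (sq_nonneg _) (by nlinarith)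
        _ = Real.cos τ + Real.sqrt 2 * d := by
            rw [Real.sqrt_sq hcos, Real.sqrt_mul (by norm_num : (0:ℝ) ≤ 2)]
        _ ≤ (π/2 - τ) + Real.sqrt 2 * d := by linarith
        _ ≤ Real.sqrt 2 * (d + π/2 - τ) := by nlinarith [hτ.2]
    rw [one_div]
    exact inv_anti₀ (Real.sqrt_pos.2 (denom_pos (by linarith) he1 τ)) hchain

lemma ellK_pos_s14 {e : ℝ} (he0 : 0 < e) (he1 : e < 1) : π/2 ≤ ellK e := by
  have hpi : (0:ℝ) < π/2 := by positivity
  have : π/2 = ∫ _ in (0:ℝ)..(π/2), (1:ℝ) := by simp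
  rw [this]
  unfold ellK ellF
  apply intervalIntegral.integral_mono_on hpi.le
  · exact intervalIntegrable_const
  · exact (cont_g (by linarith) he1).intervalIntegrable _ _
  · intro τ hτ
    have hp := denom_pos (by linarith : (-1:ℝ) < e) he1 τ
    rw [le_div_iff₀ (Real.sqrt_pos.2 hp), one_mul]
    exact Real.sqrt_le_one.2 (by nlinarith [sq_nonneg (e * Real.sin τ)])

lemma omega_facts {e f : ℝ} (hf0 : 0 < f) (hfe : f < e) (he1 : e < 1) :
    0 ≤ omegaHat e f ∧ omegaHat e f ≤ π/2 ∧
      Real.cos (omegaHat e f) = Real.sqrt (f ^ 2 / (e ^ 2 * (1 - f ^ 2))) * Real.sqrt (1 - e ^ 2) := by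
  have he0 : 0 < e := hf0.trans hfe
  have hf1 : f < 1 := hfe.trans he1
  have hden : 0 < e ^ 2 * (1 - f ^ 2) :=
    mul_pos (pow_pos he0 2) (by nlinarith : (0:ℝ) < 1 - f ^ 2)
  have hs0 : 0 ≤ (e ^ 2 - f ^ 2) / (e ^ 2 * (1 - f ^ 2)) := by
    apply div_nonneg (by nlinarith) hden.le
  have hs1 : (e ^ 2 - f ^ 2) / (e ^ 2 * (1 - f ^ 2)) ≤ 1 := by
    rw [div_le_one hden]
    nlinarith [mul_nonneg (sq_nonneg f) (show (0:ℝ) ≤ 1 - e ^ 2 by nlinarith)]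
  refine ⟨Real.arcsin_nonneg.2 (Real.sqrt_nonneg _), Real.arcsin_le_pi_div_two _, ?_⟩
  unfold omegaHat
  rw [Real.cos_arcsin, Real.sq_sqrt hs0, ← Real.sqrt_mul (by positivity)]
  congr 1
  have hf2 : (1:ℝ) - f ^ 2 ≠ 0 := by nlinarith
  have he2 : e ≠ 0 := he0.ne'
  field_simp
  ring

lemma tail_facts {e f : ℝ} (hf0 : 0 < f) (hfe : f < e) (he1 : e < 1) :
    0 ≤ ellK e - ellF (omegaHat e f) e ∧
      ellK e - ellF (omegaHat e f) e ≤ π/2 * Real.sqrt (1 / (1 - f ^ 2)) := by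
  have he0 : 0 < e := hf0.trans hfe
  have hf1 : f < 1 := hfe.trans he1
  obtain ⟨hω0, hωπ, hcos⟩ := omega_facts hf0 hfe he1
  have hcont := cont_g (show (-1:ℝ) < e by linarith) he1
  have hsplit : ellK e - ellF (omegaHat e f) e
      = ∫ τ in (omegaHat e f)..(π/2), 1 / Real.sqrt (1 - e ^ 2 * Real.sin τ ^ 2) := by
    unfold ellK ellF
    rw [eq_comm, eq_sub_iff_add_eq, add_comm]
    exact (intervalIntegral.integral_add_adjacent_intervals
      (hcont.intervalIntegrable _ _) (hcont.intervalIntegrable _ _))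
  rw [hsplit]
  constructor
  · apply intervalIntegral.integral_nonneg hωπ
    intro τ _; positivity
  · have hde : 0 < 1 - e ^ 2 := by nlinarith
    have hsq : 0 < Real.sqrt (1 - e ^ 2) := Real.sqrt_pos.2 hde
    have step1 : (∫ τ in (omegaHat e f)..(π/2), 1 / Real.sqrt (1 - e ^ 2 * Real.sin τ ^ 2))
        ≤ (π/2 - omegaHat e f) * (Real.sqrt (1 - e ^ 2))⁻¹ := by
      have : (π/2 - omegaHat e f) * (Real.sqrt (1 - e ^ 2))⁻¹
          = ∫ _ in (omegaHat e f)..(π/2), (Real.sqrt (1 - e ^ 2))⁻¹ := by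
        rw [intervalIntegral.integral_const, smul_eq_mul]
      rw [this]
      apply intervalIntegral.integral_mono_on hωπ
        (hcont.intervalIntegrable _ _) intervalIntegrable_const
      intro τ _
      rw [one_div]
      apply inv_anti₀ hsq
      apply Real.sqrt_le_sqrt
      nlinarith [Real.sin_sq_le_one τ, sq_nonneg (e * Real.sin τ)]
    have step2 : π/2 - omegaHat e f ≤ π/2 * Real.cos (omegaHat e f) := by
      have h := Real.mul_le_sin (x := π/2 - omegaHat e f) (by linarith) (by linarith)
      rw [Real.sin_pi_div_two_sub] at h
      have hπ : 0 < π := Real.pi_pos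
      have h' := mul_le_mul_of_nonneg_left h (by positivity : (0:ℝ) ≤ π/2)
      rw [show π/2 * (2/π * (π/2 - omegaHat e f)) = π/2 - omegaHat e f by
        field_simp] at h'
      exact h'
    have step3 : Real.sqrt (f ^ 2 / (e ^ 2 * (1 - f ^ 2))) ≤ Real.sqrt (1 / (1 - f ^ 2)) := by
      apply Real.sqrt_le_sqrt
      rw [div_le_div_iff₀ (by nlinarith) (by nlinarith)]
      nlinarith [mul_le_mul_of_nonneg_right (show f ^ 2 ≤ e ^ 2 by nlinarith)
        (show (0:ℝ) ≤ 1 - f ^ 2 by nlinarith)]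
    calc (∫ τ in (omegaHat e f)..(π/2), 1 / Real.sqrt (1 - e ^ 2 * Real.sin τ ^ 2))
        ≤ (π/2 - omegaHat e f) * (Real.sqrt (1 - e ^ 2))⁻¹ := step1
      _ ≤ (π/2 * Real.cos (omegaHat e f)) * (Real.sqrt (1 - e ^ 2))⁻¹ := by
          apply mul_le_mul_of_nonneg_right step2 (by positivity)
      _ = π/2 * Real.sqrt (f ^ 2 / (e ^ 2 * (1 - f ^ 2))) := by
          rw [hcos, mul_assoc, mul_inv_cancel_right₀ hsq.ne']
      _ ≤ π/2 * Real.sqrt (1 / (1 - f ^ 2)) := by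
          apply mul_le_mul_of_nonneg_left step3 (by positivity)

/-- for fixed `f ∈ (0,1)`, the billiard rotation number tends to `1/2`
as `e → 1⁻` over `e ∈ (f, 1)`. -/
theorem rhoHat_limit_half (f : ℝ) (hf0 : 0 < f) (hf1 : f < 1) :
    Tendsto (fun e => rhoHat e f) (nhdsWithin 1 (Set.Ioo f 1)) (nhds (1 / 2)) := by
  set l := nhdsWithin (1:ℝ) (Set.Ioo f 1) with hl
  have hev : ∀ᶠ e in l, e ∈ Set.Ioo f 1 := eventually_mem_nhdsWithin
  set C := π/2 * Real.sqrt (1 / (1 - f ^ 2)) with hC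
  -- sqrt(1-e) → 0 within Ioi 0
  have hsq0 : Tendsto (fun e : ℝ => Real.sqrt (1 - e)) l (nhds 0) := by
    have : Continuous (fun e : ℝ => Real.sqrt (1 - e)) :=
      (continuous_const.sub continuous_id).sqrt
    have := (this.tendsto 1).mono_left (nhdsWithin_le_nhds (s := Set.Ioo f 1))
    simpa using this
  have hsq : Tendsto (fun e : ℝ => Real.sqrt (1 - e)) l (nhdsWithin 0 (Set.Ioi 0)) := by
    rw [tendsto_nhdsWithin_iff]
    exact ⟨hsq0, hev.mono fun e he => Real.sqrt_pos.2 (by linarith [he.2])⟩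
  -- K → atTop
  have hKtop : Tendsto (fun e => ellK e) l atTop := by
    apply tendsto_atTop_mono'
      (f₁ := fun e => (Real.sqrt 2)⁻¹ * (Real.log (π/2) - Real.log (Real.sqrt (1 - e))))
    · filter_upwards [hev] with e he
      have h1 : Real.log (π/2) ≤ Real.log (Real.sqrt (1 - e) + π/2) := by
        apply Real.log_le_log (by positivity)
        have := Real.sqrt_nonneg (1 - e); linarith
      have h2 := ellK_ge_log (show 0 < e by linarith [he.1]) he.2
      have h2pos : (0:ℝ) < (Real.sqrt 2)⁻¹ := by positivity
      nlinarith
    · apply Tendsto.const_mul_atTop (by positivity : (0:ℝ) < (Real.sqrt 2)⁻¹)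
      have hneg : Tendsto (fun e : ℝ => -Real.log (Real.sqrt (1 - e))) l atTop :=
        tendsto_neg_atTop_iff.2 (Real.tendsto_log_nhdsGT_zero.comp hsq)
      have := tendsto_atTop_add_const_left l (Real.log (π/2)) hneg
      simpa [sub_eq_add_neg] using this
  have h2Ktop : Tendsto (fun e => 2 * ellK e) l atTop :=
    Tendsto.const_mul_atTop two_pos hKtop
  -- tail / (2K) → 0
  have hT0 : Tendsto (fun e => (ellK e - ellF (omegaHat e f) e) / (2 * ellK e)) l (nhds 0) := by
    apply tendsto_of_tendsto_of_tendsto_of_le_of_le' (g := fun _ => (0:ℝ))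
      (h := fun e => C / (2 * ellK e)) tendsto_const_nhds
      (Tendsto.const_div_atTop h2Ktop C)
    · filter_upwards [hev] with e he
      have hK := ellK_pos_s14 (show 0 < e by linarith [he.1]) he.2
      have hT := (tail_facts hf0 he.1 he.2).1
      have : (0:ℝ) < 2 * ellK e := by nlinarith [Real.pi_pos]
      positivity
    · filter_upwards [hev] with e he
      have hK := ellK_pos_s14 (show 0 < e by linarith [he.1]) he.2
      have hT := (tail_facts hf0 he.1 he.2).2
      have h2K : (0:ℝ) < 2 * ellK e := by nlinarith [Real.pi_pos]
      exact div_le_div_of_nonneg_right hT h2K.le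
  have hmain : Tendsto (fun e => 1/2 - (ellK e - ellF (omegaHat e f) e) / (2 * ellK e)) l
      (nhds (1/2)) := by
    have := tendsto_const_nhds (x := (1:ℝ)/2) (f := l) |>.sub hT0
    simpa using this
  apply hmain.congr'
  filter_upwards [hev] with e he
  have hK := ellK_pos_s14 (show 0 < e by linarith [he.1]) he.2
  have h2K : (2:ℝ) * ellK e ≠ 0 := by nlinarith [Real.pi_pos]
  have hK0 : ellK e ≠ 0 := (by nlinarith [Real.pi_pos] : 0 < ellK e).ne'
  unfold rhoHat
  field_simp
  ring
end
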